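/- Kleene's Theorem: for a language L over a finite alphabet Σ, the following are equivalent: (1) L is recognizable (there is a homomorphism h from Σ* to a finite monoid N with h⁻¹(h(L)) = L); (2) L is accepted by a deterministic finite automaton; (3) L is accepted by a non-deterministic finite automaton; (4) L is rational (belongs to the smallest class of subsets of Σ* containing finite sets and closed under union, concatenation, and Kleene star). -/

import Mathlib

/-- Rational languages over `α`: the smallest class containing the finite
languages and closed under union, concatenation and Kleene star. -/
inductive IsRationalLang {α : Type} : Language α → Prop
  | finite (L : Language α) : Set.Finite L → IsRationalLang L
  | union {K L : Language α} : IsRationalLang K → IsRationalLang L → IsRationalLang (K + L)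
  | concat {K L : Language α} : IsRationalLang K → IsRationalLang L → IsRationalLang (K * L)
  | star {L : Language α} : IsRationalLang L → IsRationalLang (KStar.kstar L)

namespace KleeneAux

theorem prefix_split {α} {x u v : List α} (h : x <+: u ++ v) :
    x <+: u ∨ ∃ y, x = u ++ y ∧ y <+: v := by
  obtain ⟨t, ht⟩ := h
  rcases List.append_eq_append_iff.mp ht with ⟨a, ha, _⟩ | ⟨c, hc, hc2⟩
  · left; exact ⟨a, ha.symm⟩
  · right; exact ⟨c, hc, t, hc2.symm⟩

variable {α : Type}

/-- Left quotient (Brzozowski derivative) of a language by a word. -/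
def dl (L : Language α) (w : List α) : Language α := {v | w ++ v ∈ L}

@[simp] theorem dl_nil (L : Language α) : dl L [] = L := rfl

theorem mem_dl' {L : Language α} {w v : List α} : v ∈ dl L w ↔ w ++ v ∈ L := Iff.rfl

theorem dl_append (L : Language α) (u v : List α) : dl L (u ++ v) = dl (dl L u) v := by
  ext x; rw [mem_dl', mem_dl', mem_dl', List.append_assoc]

theorem mem_dl {L : Language α} {w v : List α} : v ∈ dl L w ↔ w ++ v ∈ L := Iff.rfl

theorem nil_mem_dl {L : Language α} {w : List α} : [] ∈ dl L w ↔ w ∈ L := by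
  rw [mem_dl, List.append_nil]

theorem mem_append_kstar {L : Language α} {x u : List α} (hx : x ∈ L)
    (hu : u ∈ KStar.kstar L) : x ++ u ∈ KStar.kstar L := by
  obtain ⟨l, rfl, hl⟩ := Language.mem_kstar.mp hu
  rw [← List.flatten_cons]
  exact Language.join_mem_kstar (by
    intro y hy
    rcases List.mem_cons.mp hy with rfl | hy
    · exact hx
    · exact hl y hy)

theorem kstar_append_kstar {L : Language α} {u v : List α} (hu : u ∈ KStar.kstar L)
    (hv : v ∈ KStar.kstar L) : u ++ v ∈ KStar.kstar L := by
  obtain ⟨l, rfl, hl⟩ := Language.mem_kstar.mp hu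
  obtain ⟨m, rfl, hm⟩ := Language.mem_kstar.mp hv
  rw [← List.flatten_append]
  exact Language.join_mem_kstar (by
    intro y hy
    rcases List.mem_append.mp hy with hy | hy
    · exact hl y hy
    · exact hm y hy)

/-- A language has finitely many left quotients. -/
def FinQuot (L : Language α) : Prop := (Set.range (dl L)).Finite

theorem finQuot_of_finite {L : Language α} (h : Set.Finite L) : FinQuot L := by
  have hS : ({v | ∃ w, w ++ v ∈ L} : Set (List α)).Finite := by
    have : {v | ∃ w, w ++ v ∈ L} ⊆ ⋃ x ∈ L, {l | l ∈ x.tails} := by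
      rintro v ⟨w, hw⟩
      exact Set.mem_biUnion hw (by simp [List.mem_tails])
    exact (h.biUnion fun x _ => x.tails.finite_toSet).subset this
  refine (hS.finite_subsets.subset ?_)
  rintro _ ⟨w, rfl⟩ v hv
  exact ⟨w, hv⟩

/-- Union of a set of languages. -/
def sup' (S : Set (Language α)) : Language α := {v | ∃ M ∈ S, v ∈ M}

theorem mem_sup' {S : Set (Language α)} {v : List α} : v ∈ sup' S ↔ ∃ M ∈ S, v ∈ M := Iff.rfl

theorem dl_add (K L : Language α) (w : List α) : dl (K + L) w = dl K w + dl L w := rfl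

theorem finQuot_add {K L : Language α} (hK : FinQuot K) (hL : FinQuot L) : FinQuot (K + L) := by
  refine ((hK.prod hL).image fun p => p.1 + p.2).subset ?_
  rintro _ ⟨w, rfl⟩
  exact ⟨(dl K w, dl L w), ⟨⟨w, rfl⟩, ⟨w, rfl⟩⟩, (dl_add K L w).symm⟩

theorem dl_mul (K L : Language α) (w : List α) :
    dl (K * L) w = dl K w * L + sup' {M : Language α | ∃ t u, w = u ++ t ∧ u ∈ K ∧ M = dl L t} := by
  ext v
  simp only [mem_dl, Language.mem_add, mem_sup', Language.mem_mul, Set.mem_setOf_eq]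
  constructor
  · rintro ⟨a, ha, b, hb, hab⟩
    rcases List.append_eq_append_iff.mp hab.symm with ⟨a', ha', hv⟩ | ⟨c, hc, hb'⟩
    · -- a = w ++ a'
      left
      exact ⟨a', show w ++ a' ∈ K from ha' ▸ ha, b, hb, hv.symm⟩
    · -- w = a ++ c, b = c ++ v
      right
      exact ⟨dl L c, ⟨c, a, hc, ha, rfl⟩, show c ++ v ∈ L from hb' ▸ hb⟩
  · rintro (⟨a, ha, b, hb, hab⟩ | ⟨M, ⟨t, u, rfl, hu, rfl⟩, hv⟩)
    · exact ⟨w ++ a, ha, b, hb, by rw [← hab, List.append_assoc]⟩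
    · exact ⟨u, hu, t ++ v, hv, by rw [List.append_assoc]⟩

theorem finQuot_mul {K L : Language α} (hK : FinQuot K) (hL : FinQuot L) : FinQuot (K * L) := by
  refine ((hK.prod hL.finite_subsets).image fun p : Language α × Set (Language α) => p.1 * L + sup' p.2).subset ?_
  rintro _ ⟨w, rfl⟩
  refine ⟨(dl K w, {M | ∃ t u, w = u ++ t ∧ u ∈ K ∧ M = dl L t}), ⟨⟨w, rfl⟩, ?_⟩, (dl_mul K L w).symm⟩
  rintro _ ⟨t, u, _, _, rfl⟩
  exact ⟨t, rfl⟩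

theorem kstar_split {L : Language α} :
    ∀ (l : List (List α)), (∀ x ∈ l, x ∈ L) → ∀ w v : List α, w ≠ [] → w ++ v = l.flatten →
      ∃ u t v₁ v₂, w = u ++ t ∧ t ≠ [] ∧ u ∈ (KStar.kstar L) ∧ t ++ v₁ ∈ L ∧
        v₂ ∈ (KStar.kstar L) ∧ v = v₁ ++ v₂
  | [], _, w, v, hw, h => by
      simp only [List.flatten_nil] at h
      exact absurd (List.append_eq_nil_iff.mp h).1 hw
  | x :: l, hl, w, v, hw, h => by
      rw [List.flatten_cons] at h
      rcases List.append_eq_append_iff.mp h with ⟨a, ha, hv⟩ | ⟨c, hc, hfl⟩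
      · -- x = w ++ a, v = a ++ l.flatten
        exact ⟨[], w, a, l.flatten, rfl, hw, Language.nil_mem_kstar L,
          by rw [← ha]; exact hl x List.mem_cons_self,
          Language.join_mem_kstar fun y hy => hl y (List.mem_cons_of_mem x hy), hv⟩
      · -- w = x ++ c, l.flatten = c ++ v
        rcases eq_or_ne c [] with rfl | hc0
        · rw [List.append_nil] at hc
          rw [List.nil_append] at hfl
          refine ⟨[], w, [], v, rfl, hw, Language.nil_mem_kstar L, ?_, ?_, rfl⟩
          · rw [List.append_nil, hc]
            exact hl x List.mem_cons_self
          · exact hfl ▸ Language.join_mem_kstar fun y hy => hl y (List.mem_cons_of_mem x hy)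
        · obtain ⟨u, t, v₁, v₂, hct, ht, hu, htv, hv₂, hvv⟩ :=
            kstar_split l (fun y hy => hl y (List.mem_cons_of_mem x hy)) c v hc0 hfl.symm
          exact ⟨x ++ u, t, v₁, v₂, by rw [hc, hct, List.append_assoc], ht,
            mem_append_kstar (hl x List.mem_cons_self) hu,
            htv, hv₂, hvv⟩
theorem dl_kstar (L : Language α) (w : List α) (hw : w ≠ []) :
    dl (KStar.kstar L) w =
      sup' {M : Language α | ∃ t u, w = u ++ t ∧ u ∈ KStar.kstar L ∧ t ≠ [] ∧ M = dl L t} *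
        KStar.kstar L := by
  ext v
  simp only [mem_dl, Language.mem_mul, mem_sup', Set.mem_setOf_eq]
  constructor
  · intro h
    obtain ⟨l, hflat, hl⟩ := Language.mem_kstar.mp h
    obtain ⟨u, t, v₁, v₂, hut, ht, hu, htv, hv₂, hvv⟩ := kstar_split l hl w v hw hflat
    exact ⟨v₁, ⟨dl L t, ⟨t, u, hut, hu, ht, rfl⟩, htv⟩, v₂, hv₂, hvv.symm⟩
  · rintro ⟨v₁, ⟨M, ⟨t, u, rfl, hu, _, rfl⟩, hv₁⟩, v₂, hv₂, rfl⟩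
    rw [List.append_assoc, ← List.append_assoc t]
    exact kstar_append_kstar hu (mem_append_kstar hv₁ hv₂)

theorem finQuot_kstar {L : Language α} (hL : FinQuot L) : FinQuot (KStar.kstar L) := by
  refine ((hL.finite_subsets.image fun S => sup' S * KStar.kstar L).insert
    (KStar.kstar L)).subset ?_
  rintro _ ⟨w, rfl⟩
  rcases eq_or_ne w [] with rfl | hw
  · exact Set.mem_insert_iff.mpr (Or.inl (dl_nil _))
  · refine Set.mem_insert_iff.mpr (Or.inr ⟨{M : Language α |
      ∃ t u, w = u ++ t ∧ u ∈ KStar.kstar L ∧ t ≠ [] ∧ M = dl L t}, ?_, (dl_kstar L w hw).symm⟩)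
    rintro _ ⟨t, u, _, _, _, rfl⟩
    exact ⟨t, rfl⟩

theorem finQuot_rational {L : Language α} (h : IsRationalLang L) : FinQuot L := by
  induction h with
  | finite L hL => exact finQuot_of_finite hL
  | union _ _ ihK ihL => exact finQuot_add ihK ihL
  | concat _ _ ihK ihL => exact finQuot_mul ihK ihL
  | star _ ih => exact finQuot_kstar ih

/-- The quotient DFA of a language with finitely many quotients. -/
noncomputable def quotDFA (L : Language α) : DFA α (Set.range (dl L)) where
  step q a := ⟨dl q.1 [a], by
    obtain ⟨w, hw⟩ := q.2
    exact ⟨w ++ [a], by rw [dl_append, hw]⟩⟩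
  start := ⟨L, [], dl_nil L⟩
  accept := {q | [] ∈ q.1}

theorem quotDFA_evalFrom (L : Language α) :
    ∀ (w : List α) (q : Set.range (dl L)), ((quotDFA L).evalFrom q w).1 = dl q.1 w
  | [], q => (dl_nil _).symm
  | a :: w, q => by
      rw [show (a :: w) = [a] ++ w from rfl, DFA.evalFrom_of_append, dl_append]
      exact quotDFA_evalFrom L w _

theorem quotDFA_accepts {L : Language α} (h : FinQuot L) : (quotDFA L).accepts = L := by
  ext w
  have : w ∈ (quotDFA L).accepts ↔ [] ∈ ((quotDFA L).evalFrom (quotDFA L).start w).1 := Iff.rfl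
  rw [this, quotDFA_evalFrom, nil_mem_dl]
  exact Iff.rfl

theorem rational_to_dfa {L : Language α} (h : IsRationalLang L) :
    ∃ (σ : Type) (_ : Fintype σ) (M : DFA α σ), M.accepts = L := by
  have hf := finQuot_rational h
  exact ⟨Set.range (dl L), @Fintype.ofFinite _ hf.to_subtype, quotDFA L, quotDFA_accepts hf⟩


theorem single_mem_kstar {L : Language α} {x : List α} (hx : x ∈ L) : x ∈ KStar.kstar L := by
  have : x = List.flatten [x] := by simp
  rw [this]
  exact Language.join_mem_kstar (by simpa)

section Path

variable {σ : Type} (M : DFA α σ)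

/-- Words taking `p` to `q` with all intermediate states in `S`. -/
def path (p q : σ) (S : Set σ) : Language α :=
  {w | M.evalFrom p w = q ∧ ∀ u, u ≠ [] → u ≠ w → u <+: w → M.evalFrom p u ∈ S}

variable {M} {p q r s : σ} {S T : Set σ}

theorem path_mono (hST : S ⊆ T) {w : List α} (hw : w ∈ path M p q S) : w ∈ path M p q T :=
  ⟨hw.1, fun u hu1 hu2 hu3 => hST (hw.2 u hu1 hu2 hu3)⟩

theorem nil_mem_path : [] ∈ path M p p S :=
  ⟨rfl, fun u hu1 _ hu3 => absurd (List.prefix_nil.mp hu3) hu1⟩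

theorem append_mem_path (hr : r ∈ S) {u v : List α}
    (hu : u ∈ path M p r S) (hv : v ∈ path M r q S) : u ++ v ∈ path M p q S := by
  refine ⟨by rw [DFA.evalFrom_of_append, hu.1, hv.1], fun x hx1 hx2 hx3 => ?_⟩
  rcases prefix_split hx3 with hxu | ⟨y, rfl, hyv⟩
  · rcases eq_or_ne x u with rfl | hxu'
    · rw [hu.1]; exact hr
    · exact hu.2 x hx1 hxu' hxu
  · rcases eq_or_ne y [] with rfl | hy0
    · rw [List.append_nil, hu.1]; exact hr
    · have hyv' : y ≠ v := fun h => hx2 (by rw [h])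
      rw [DFA.evalFrom_of_append, hu.1]
      exact hv.2 y hy0 hyv' hyv

theorem flatten_mem_path (hs : s ∈ S) :
    ∀ l : List (List α), (∀ y ∈ l, y ∈ path M s s S) → l.flatten ∈ path M s s S
  | [], _ => nil_mem_path
  | x :: l, hl => by
      rw [List.flatten_cons]
      exact append_mem_path hs (hl x List.mem_cons_self)
        (flatten_mem_path hs l fun y hy => hl y (List.mem_cons_of_mem x hy))

theorem kstar_path_mem (hs : s ∈ S) {m : List α}
    (hm : m ∈ KStar.kstar (path M s s S)) : m ∈ path M s s S := by
  obtain ⟨l, rfl, hl⟩ := Language.mem_kstar.mp hm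
  exact flatten_mem_path hs l hl

theorem path_insert_subset_aux :
    ∀ (n : ℕ) (w : List α), w.length ≤ n → ∀ p q, w ∈ path M p q (insert s S) →
      w ∈ path M p q S + path M p s S * KStar.kstar (path M s s S) * path M s q S := by
  intro n
  induction n with
  | zero =>
      intro w hw p q hpq
      rw [Nat.le_zero, List.length_eq_zero_iff] at hw
      subst hw
      exact Or.inl ⟨hpq.1, fun u hu1 _ hu3 => absurd (List.prefix_nil.mp hu3) hu1⟩
  | succ n ih =>
      intro w hw p q hpq
      by_cases hS : w ∈ path M p q S
      · exact Or.inl hS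
      · have hex : ∃ u, u ≠ [] ∧ u ≠ w ∧ u <+: w ∧ M.evalFrom p u = s := by
          by_contra hcon
          push_neg at hcon
          refine hS ⟨hpq.1, fun u hu1 hu2 hu3 => ?_⟩
          rcases Set.mem_insert_iff.mp (hpq.2 u hu1 hu2 hu3) with h | h
          · exact absurd h (hcon u hu1 hu2 hu3)
          · exact h
        obtain ⟨u, hu0, huw, ⟨v, rfl⟩, hus⟩ := hex
        have hv0 : v ≠ [] := fun h => huw (by rw [h, List.append_nil])
        have hu1 : 1 ≤ u.length := List.length_pos_iff.mpr hu0
        have hv1 : 1 ≤ v.length := List.length_pos_iff.mpr hv0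
        have hlen := List.length_append (as := u) (bs := v)
        have hul : u.length ≤ n := by omega
        have hvl : v.length ≤ n := by omega
        have hu : u ∈ path M p s (insert s S) := by
          refine ⟨hus, fun x hx1 hx2 hx3 => ?_⟩
          have hxw : x ≠ u ++ v := by
            intro h
            have h1 := hx3.length_le
            have h2 : x.length = u.length + v.length := by rw [h, List.length_append]
            omega
          exact hpq.2 x hx1 hxw (hx3.trans (u.prefix_append v))
        have hv : v ∈ path M s q (insert s S) := by
          refine ⟨?_, fun y hy1 hy2 hy3 => ?_⟩
          · have := hpq.1
            rwa [DFA.evalFrom_of_append, hus] at this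
          · have huy : u ++ y ≠ u ++ v := fun h => hy2 (List.append_cancel_left h)
            have huy2 : u ++ y <+: u ++ v := by
              obtain ⟨t, rfl⟩ := hy3
              exact ⟨t, by rw [List.append_assoc]⟩
            have := hpq.2 (u ++ y) (by simp [hu0]) huy huy2
            rwa [DFA.evalFrom_of_append, hus] at this
        have hu' := ih u hul p s hu
        have hv' := ih v hvl s q hv
        -- extract u ∈ A * B∗ and v ∈ B∗ * C
        have huA : ∃ a m, a ∈ path M p s S ∧ m ∈ KStar.kstar (path M s s S) ∧ u = a ++ m := by
          rcases hu' with h | h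
          · exact ⟨u, [], h, Language.nil_mem_kstar _, (List.append_nil u).symm⟩
          · obtain ⟨am, ⟨a, ha, m, hm, rfl⟩, b, hb, rfl⟩ := h
            exact ⟨a, m ++ b, ha, kstar_append_kstar hm (single_mem_kstar hb),
              by simp [List.append_assoc]⟩
        have hvC : ∃ m c, m ∈ KStar.kstar (path M s s S) ∧ c ∈ path M s q S ∧ v = m ++ c := by
          rcases hv' with h | h
          · exact ⟨[], v, Language.nil_mem_kstar _, h, rfl⟩
          · obtain ⟨bm, ⟨b, hb, m, hm, rfl⟩, c, hc, rfl⟩ := h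
            exact ⟨b ++ m, c, kstar_append_kstar (single_mem_kstar hb) hm, hc,
              by simp [List.append_assoc]⟩
        obtain ⟨a, m₁, ha, hm₁, rfl⟩ := huA
        obtain ⟨m₂, c, hm₂, hc, rfl⟩ := hvC
        refine Or.inr ⟨a ++ (m₁ ++ m₂), ⟨a, ha, m₁ ++ m₂, kstar_append_kstar hm₁ hm₂, rfl⟩,
          c, hc, by simp [List.append_assoc]⟩

theorem path_insert_eq :
    path M p q (insert s S) =
      path M p q S + path M p s S * KStar.kstar (path M s s S) * path M s q S := by
  apply Set.Subset.antisymm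
  · intro w hw
    exact path_insert_subset_aux w.length w le_rfl p q hw
  · intro w hw
    rcases hw with h | ⟨am, ⟨a, ha, m, hm, rfl⟩, c, hc, rfl⟩
    · exact path_mono (Set.subset_insert s S) h
    · have hm' : m ∈ path M s s (insert s S) := by
        refine kstar_path_mem (Set.mem_insert s S) ?_
        obtain ⟨l, rfl, hl⟩ := Language.mem_kstar.mp hm
        exact Language.join_mem_kstar fun y hy =>
          path_mono (Set.subset_insert s S) (hl y hy)
      exact append_mem_path (Set.mem_insert s S)
        (append_mem_path (Set.mem_insert s S) (path_mono (Set.subset_insert s S) ha) hm')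
        (path_mono (Set.subset_insert s S) hc)

theorem path_rational [Fintype α] (S : Set σ) (hS : S.Finite) :
    ∀ p q, IsRationalLang (path M p q S) := by
  refine Set.Finite.induction_on (motive := fun S _ => ∀ p q, IsRationalLang (path M p q S)) S hS
    (fun p q => ?_) (fun {s S'} _ hS' ih p q => ?_)
  ·
      refine IsRationalLang.finite _ (Set.Finite.subset (List.finite_length_le α 1) ?_)
      intro w hw
      by_contra hlen
      simp only [Set.mem_setOf_eq, not_le] at hlen
      have h1 : (w.take 1).length = 1 := by
        rw [List.length_take]; omega
      have h0 : w.take 1 ≠ [] := by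
        intro h; rw [h] at h1; simp at h1
      have hne : w.take 1 ≠ w := by
        intro h
        rw [h] at h1; omega
      exact (hw.2 (w.take 1) h0 hne (List.take_prefix 1 w)).elim
  · rw [path_insert_eq]
    exact IsRationalLang.union (ih p q)
      (IsRationalLang.concat
        (IsRationalLang.concat (ih _ _) (IsRationalLang.star (ih _ _))) (ih _ _))

theorem dfa_accepts_rational [Fintype α] [Fintype σ] (M : DFA α σ) :
    IsRationalLang M.accepts := by
  have key : ∀ F : Finset σ, IsRationalLang (show Language α from {w : List α | M.evalFrom M.start w ∈ F}) := by
    intro F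
    classical
    induction F using Finset.induction_on with
    | empty =>
        refine IsRationalLang.finite _ ?_
        convert Set.finite_empty
        ext w; simp
    | @insert a F ha ih =>
        have heq : (show Language α from {w : List α | M.evalFrom M.start w ∈ insert a F}) =
            path M M.start a Set.univ +
              (show Language α from {w : List α | M.evalFrom M.start w ∈ F}) := by
          ext w
          simp only [Set.mem_setOf_eq, Finset.mem_insert, Language.mem_add]
          constructor
          · rintro (h | h)
            · exact Or.inl ⟨h, fun _ _ _ _ => Set.mem_univ _⟩
            · exact Or.inr h
          · rintro (h | h)
            · exact Or.inl h.1
            · exact Or.inr h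
        rw [heq]
        exact IsRationalLang.union (path_rational Set.univ (Set.finite_univ) _ _) ih
  have := key (Set.toFinite M.accept).toFinset
  convert this using 1
  ext w
  rw [DFA.mem_accepts]
  simp only [Set.mem_setOf_eq, Set.Finite.mem_toFinset]
  exact Iff.rfl

end Path


section Monoid

variable {σ : Type} [Fintype σ]

/-- The transition homomorphism of a DFA. -/
def transHom (M : DFA α σ) : FreeMonoid α →* (Function.End σ)ᵐᵒᵖ where
  toFun w := MulOpposite.op (fun s => M.evalFrom s (FreeMonoid.toList w))
  map_one' := rfl
  map_mul' x y := by
    apply MulOpposite.unop_injective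
    funext s
    exact M.evalFrom_of_append s (FreeMonoid.toList x) (FreeMonoid.toList y)

theorem dfa_recog (M : DFA α σ) :
    ∃ (N : Type) (_ : Monoid N) (_ : Finite N) (h : FreeMonoid α →* N),
      (fun w : List α => h (FreeMonoid.ofList w)) ⁻¹'
        ((fun w : List α => h (FreeMonoid.ofList w)) '' M.accepts) = M.accepts := by
  haveI : Finite (Function.End σ) := inferInstanceAs (Finite (σ → σ))
  haveI : Finite (Function.End σ)ᵐᵒᵖ := Finite.of_equiv _ MulOpposite.opEquiv
  refine ⟨(Function.End σ)ᵐᵒᵖ, inferInstance, inferInstance, transHom M, ?_⟩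
  apply Set.Subset.antisymm _ (Set.subset_preimage_image _ _)
  rintro w ⟨w', hw', heq⟩
  have : M.evalFrom M.start w' = M.evalFrom M.start w :=
    congrFun (congrArg MulOpposite.unop heq) M.start
  have hw : M.evalFrom M.start w ∈ M.accept := this ▸ hw'
  exact hw

theorem recog_to_dfa {N : Type} [Monoid N] [Finite N] (h : FreeMonoid α →* N)
    (L : Language α)
    (hL : (fun w : List α => h (FreeMonoid.ofList w)) ⁻¹'
      ((fun w : List α => h (FreeMonoid.ofList w)) '' L) = L) :
    ∃ (σ : Type) (_ : Fintype σ) (M : DFA α σ), M.accepts = L := by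
  letI := Fintype.ofFinite N
  refine ⟨N, inferInstance,
    ⟨fun n a => n * h (FreeMonoid.of a), 1, (fun w : List α => h (FreeMonoid.ofList w)) '' L⟩, ?_⟩
  set M : DFA α N :=
    ⟨fun n a => n * h (FreeMonoid.of a), 1, (fun w : List α => h (FreeMonoid.ofList w)) '' L⟩
    with hM
  have ev : ∀ (w : List α) (n : N), M.evalFrom n w = n * h (FreeMonoid.ofList w) := by
    intro w
    induction w with
    | nil => intro n; simp [FreeMonoid.ofList_nil]
    | cons a w ih =>
        intro n
        have : M.evalFrom n (a :: w) = M.evalFrom (n * h (FreeMonoid.of a)) w := rfl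
        rw [this, ih, FreeMonoid.ofList_cons, map_mul, mul_assoc]
  ext w
  have : w ∈ M.accepts ↔ M.evalFrom 1 w ∈ M.accept := Iff.rfl
  rw [this, ev, one_mul]
  constructor
  · intro hx
    have : w ∈ (fun w : List α => h (FreeMonoid.ofList w)) ⁻¹'
        ((fun w : List α => h (FreeMonoid.ofList w)) '' L) := hx
    rwa [hL] at this
  · intro hx
    exact ⟨w, hx, rfl⟩

end Monoid

end KleeneAux

/-- Kleene's theorem: recognizability by a finite monoid, acceptance by a DFA,
acceptance by an NFA, and rationality are all equivalent. -/
theorem kleene_theorem {α : Type} [Fintype α] (L : Language α) :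
    List.TFAE
      [ ∃ (N : Type) (_ : Monoid N) (_ : Finite N) (h : FreeMonoid α →* N),
          (fun w : List α => h (FreeMonoid.ofList w)) ⁻¹'
            ((fun w : List α => h (FreeMonoid.ofList w)) '' L) = L,
        ∃ (σ : Type) (_ : Fintype σ) (M : DFA α σ), M.accepts = L,
        ∃ (σ : Type) (_ : Fintype σ) (M : NFA α σ), M.accepts = L,
        IsRationalLang L ] := by
  tfae_have 1 → 2
  · rintro ⟨N, hM, hF, h, hL⟩
    exact @KleeneAux.recog_to_dfa α N hM hF h L hL
  tfae_have 2 → 3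
  · rintro ⟨σ, hσ, M, hL⟩
    exact ⟨σ, hσ, M.toNFA, by rw [M.toNFA_correct, hL]⟩
  tfae_have 3 → 2
  · rintro ⟨σ, hσ, M, hL⟩
    haveI := hσ
    exact ⟨Set σ, Fintype.ofFinite _, M.toDFA, by rw [M.toDFA_correct, hL]⟩
  tfae_have 2 → 1
  · rintro ⟨σ, hσ, M, rfl⟩
    exact @KleeneAux.dfa_recog α σ hσ M
  tfae_have 2 → 4
  · rintro ⟨σ, hσ, M, rfl⟩
    exact @KleeneAux.dfa_accepts_rational α σ _ hσ M
  tfae_have 4 → 2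
  · exact KleeneAux.rational_to_dfa
  tfae_finish
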